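/- arXiv:2512.16711 — 4 statements merged into one kernel-verified Lean document; each statement's English description precedes it below -/
import Mathlib

section
/- Let n ≥ 1, s ∈ ℝ and 0 < q, r ≤ ∞. Every function g ∈ C_c^∞(ℝⁿ) satisfies ‖g‖_{K̇^s_{q,r}} < ∞ if and only if either s/n + 1/q > 0, or s/n + 1/q = 0 and r = ∞. -/
open MeasureTheory Set ENNReal Filter

noncomputable section

abbrev Euc (n : ℕ) : Type := EuclideanSpace ℝ (Fin n)

def annulus (n : ℕ) (j : ℤ) : Set (Euc n) :=
  {x : Euc n | (2 : ℝ) ^ (j - 1) ≤ ‖x‖ ∧ ‖x‖ < (2 : ℝ) ^ j}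

def herzNorm (n : ℕ) (s : ℝ) (q r : ℝ≥0∞) (f : Euc n → ℝ) : ℝ≥0∞ :=
  if r = ⊤ then
    ⨆ j : ℤ, ENNReal.ofReal ((2 : ℝ) ^ ((j : ℝ) * s)) *
      eLpNorm ((annulus n j).indicator f) q volume
  else
    (∑' j : ℤ, (ENNReal.ofReal ((2 : ℝ) ^ ((j : ℝ) * s)) *
      eLpNorm ((annulus n j).indicator f) q volume) ^ r.toReal) ^ (1 / r.toReal)

namespace HerzAux

open Metric

def v (n : ℕ) : ℝ≥0∞ := volume (ball (0 : Euc n) 1)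

lemma v_pos (n : ℕ) : 0 < v n := measure_ball_pos _ _ one_pos
lemma v_lt_top (n : ℕ) : v n < ⊤ := measure_ball_lt_top

lemma nontriv (n : ℕ) (hn : 1 ≤ n) : Nontrivial (Euc n) :=
  Module.nontrivial_of_finrank_pos (R := ℝ) (by rw [finrank_euclideanSpace_fin]; omega)

lemma annulus_eq (n : ℕ) (j : ℤ) :
    annulus n j = ball (0 : Euc n) ((2:ℝ)^j) \ ball 0 ((2:ℝ)^(j-1)) := by
  ext x
  simp only [annulus, mem_setOf_eq, mem_diff, mem_ball, dist_zero_right, not_lt]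
  tauto

lemma measurableSet_annulus (n : ℕ) (j : ℤ) : MeasurableSet (annulus n j) := by
  rw [annulus_eq]; exact measurableSet_ball.diff measurableSet_ball

lemma zpow_lt (j : ℤ) : (2:ℝ)^(j-1) < (2:ℝ)^j :=
  zpow_lt_zpow_right₀ (by norm_num : (1:ℝ)<2) (by omega)

lemma volume_annulus (n : ℕ) (hn : 1 ≤ n) (j : ℤ) :
    volume (annulus n j)
      = ENNReal.ofReal (((2:ℝ)^j)^n - ((2:ℝ)^(j-1))^n) * v n := by
  haveI := nontriv n hn
  rw [annulus_eq, measure_diff (ball_subset_ball (zpow_lt j).le)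
      measurableSet_ball.nullMeasurableSet measure_ball_lt_top.ne,
    Measure.addHaar_ball volume (0 : Euc n) (r := (2:ℝ)^j) (by positivity),
    Measure.addHaar_ball volume (0 : Euc n) (r := (2:ℝ)^(j-1)) (by positivity),
    finrank_euclideanSpace_fin, ENNReal.ofReal_sub _ (by positivity),
    ENNReal.sub_mul (fun _ _ => (v_lt_top n).ne)]
  simp [v]

lemma volume_annulus_pos (n : ℕ) (hn : 1 ≤ n) (j : ℤ) : 0 < volume (annulus n j) := by
  rw [volume_annulus n hn j]
  refine ENNReal.mul_pos ?_ (v_pos n).ne'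
  rw [ne_eq, ENNReal.ofReal_eq_zero, not_le, sub_pos]
  exact pow_lt_pow_left₀ (zpow_lt j) (by positivity) (by omega)

lemma volume_annulus_le (n : ℕ) (hn : 1 ≤ n) (j : ℤ) :
    volume (annulus n j) ≤ ENNReal.ofReal (((2:ℝ)^j)^n) * v n := by
  haveI := nontriv n hn
  calc volume (annulus n j) ≤ volume (ball (0:Euc n) ((2:ℝ)^j)) :=
        measure_mono (by rw [annulus_eq]; exact diff_subset)
    _ = _ := by
        rw [Measure.addHaar_ball volume _ (by positivity), finrank_euclideanSpace_fin]; rfl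

/-- `tp a j = 2^(j*a)` as an extended real. -/
def tp (a : ℝ) (j : ℤ) : ℝ≥0∞ := ENNReal.ofReal ((2:ℝ) ^ ((j:ℝ) * a))

lemma tp_pos (a : ℝ) (j : ℤ) : 0 < tp a j := by
  rw [tp, ENNReal.ofReal_pos]; positivity

lemma tp_ne_top (a : ℝ) (j : ℤ) : tp a j ≠ ⊤ := ENNReal.ofReal_ne_top

lemma tp_mul (a b : ℝ) (j : ℤ) : tp a j * tp b j = tp (a + b) j := by
  rw [tp, tp, tp, ← ENNReal.ofReal_mul (by positivity), ← Real.rpow_add two_pos, mul_add]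

lemma tp_rpow (a p : ℝ) (j : ℤ) : tp a j ^ p = tp (a * p) j := by
  rw [tp, tp, ENNReal.ofReal_rpow_of_pos (by positivity),
    ← Real.rpow_mul (by norm_num : (0:ℝ) ≤ 2), mul_assoc]

lemma tp_mono (a : ℝ) (ha : 0 ≤ a) {i j : ℤ} (hij : i ≤ j) : tp a i ≤ tp a j := by
  rw [tp, tp]
  apply ENNReal.ofReal_le_ofReal
  apply Real.rpow_le_rpow_of_exponent_le one_le_two
  have : (i:ℝ) ≤ (j:ℝ) := by exact_mod_cast hij
  nlinarith

lemma one_le_tp {a : ℝ} (ha : a ≤ 0) {j : ℤ} (hj : j ≤ 0) : 1 ≤ tp a j := by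
  rw [tp, show (1:ℝ≥0∞) = ENNReal.ofReal 1 by simp]
  apply ENNReal.ofReal_le_ofReal
  apply Real.one_le_rpow one_le_two
  have : (j:ℝ) ≤ 0 := by exact_mod_cast hj
  nlinarith

lemma two_zpow_pow (j : ℤ) (n : ℕ) : ((2:ℝ)^j)^n = (2:ℝ) ^ ((j:ℝ) * n) := by
  rw [← Real.rpow_intCast 2 j, ← Real.rpow_natCast ((2:ℝ) ^ (j:ℝ)) n,
    ← Real.rpow_mul (by norm_num)]

/-- Upper bound on a single Herz term for a bounded function. -/
lemma term_le (n : ℕ) (hn : 1 ≤ n) (q : ℝ≥0∞) (hq : q ≠ 0) (s : ℝ) (g : Euc n → ℝ)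
    (M : ℝ) (hM : 0 ≤ M) (hg : ∀ x, ‖g x‖ ≤ M) (j : ℤ) :
    ENNReal.ofReal ((2:ℝ)^((j:ℝ)*s)) * eLpNorm ((annulus n j).indicator g) q volume
      ≤ (ENNReal.ofReal M * (v n) ^ (1/q.toReal)) * tp (s + n * (1/q.toReal)) j := by
  set κ := 1/q.toReal with hκ
  have hκ0 : 0 ≤ κ := by positivity
  have h1 : eLpNorm ((annulus n j).indicator g) q volume
      ≤ ENNReal.ofReal M * volume (annulus n j) ^ κ := by
    have hmono : eLpNorm ((annulus n j).indicator g) q volume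
        ≤ eLpNorm ((annulus n j).indicator (fun _ => M)) q volume := by
      apply eLpNorm_mono
      intro x
      by_cases hx : x ∈ annulus n j
      · simp only [Set.indicator_of_mem hx]
        rw [Real.norm_eq_abs]
        exact (hg x).trans (le_abs_self M)
      · simp [Set.indicator_of_notMem hx]
    rwa [eLpNorm_indicator_const' (measurableSet_annulus n j)
        (volume_annulus_pos n hn j).ne' hq, Real.enorm_eq_ofReal hM] at hmono
  calc ENNReal.ofReal ((2:ℝ)^((j:ℝ)*s)) * eLpNorm ((annulus n j).indicator g) q volume
      ≤ tp s j * (ENNReal.ofReal M * (ENNReal.ofReal (((2:ℝ)^j)^n) * v n) ^ κ) :=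
        mul_le_mul_right (h1.trans (mul_le_mul_right
          (ENNReal.rpow_le_rpow (volume_annulus_le n hn j) hκ0) _)) _
    _ = _ := by
        rw [ENNReal.mul_rpow_of_nonneg _ _ hκ0, two_zpow_pow,
          show ENNReal.ofReal ((2:ℝ) ^ ((j:ℝ) * n)) = tp (n:ℝ) j from rfl,
          tp_rpow, ← tp_mul]
        ring

/-- Geometric bound: sum of terms dominated by `c * 2^(j*a)` for `j ≤ m`, `a > 0`. -/
lemma tsum_geom_lt_top {a : ℝ} (ha : 0 < a) (m : ℤ) (c : ℝ≥0∞) (hc : c ≠ ⊤) (f : ℤ → ℝ≥0∞)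
    (hf : ∀ j, f j ≤ if j ≤ m then c * tp a j else 0) : ∑' j, f j < ⊤ := by
  set g : ℤ → ℝ≥0∞ := fun j => if j ≤ m then c * tp a j else 0 with hgdef
  have h1 : ∑' j, f j ≤ ∑' j, g j := ENNReal.tsum_le_tsum hf
  have hinj : Function.Injective (fun k : ℕ => m - (k:ℤ)) := by
    intro a b h
    simp only at h
    omega
  have hsupp : Function.support g ⊆ Set.range (fun k : ℕ => m - (k:ℤ)) := by
    intro j hj
    rcases le_or_gt j m with h | h
    · exact ⟨(m - j).toNat, by simp only; omega⟩
    · exact absurd (by simp [hgdef, not_le.2 h] : g j = 0) hj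
  have h2 : ∑' j, g j = ∑' k : ℕ, g (m - (k:ℤ)) := (hinj.tsum_eq hsupp).symm
  set y : ℝ≥0∞ := ENNReal.ofReal ((2:ℝ)^(-a)) with hy
  have h3 : ∀ k : ℕ, g (m - (k:ℤ)) = (c * tp a m) * y ^ k := by
    intro k
    have hle : (m - (k:ℤ)) ≤ m := by omega
    rw [hgdef]
    simp only [if_pos hle]
    rw [mul_assoc]
    congr 1
    rw [tp, tp, hy, ← ENNReal.ofReal_pow (by positivity), ← ENNReal.ofReal_mul (by positivity)]
    congr 1
    rw [← Real.rpow_natCast ((2:ℝ)^(-a)) k, ← Real.rpow_mul (by norm_num),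
      ← Real.rpow_add two_pos]
    congr 1
    push_cast
    ring
  have hy1 : y < 1 :=
    ENNReal.ofReal_lt_one.2 (Real.rpow_lt_one_of_one_lt_of_neg one_lt_two (by linarith))
  refine lt_of_le_of_lt h1 ?_
  rw [h2]
  calc ∑' k : ℕ, g (m - (k:ℤ)) = (c * tp a m) * ∑' k : ℕ, y ^ k := by
        simp only [h3]; exact ENNReal.tsum_mul_left
    _ < ⊤ := by
        apply ENNReal.mul_lt_top
        · exact ENNReal.mul_lt_top hc.lt_top (tp_ne_top a m).lt_top
        · rw [ENNReal.tsum_geometric]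
          exact ENNReal.inv_lt_top.2 (tsub_pos_of_lt hy1)

end HerzAux

namespace HerzAux

open Metric

/-- Value of the Herz term for a function equal to `1` on the closed unit ball, `j ≤ 0`. -/
lemma term_bump (n : ℕ) (hn : 1 ≤ n) (q : ℝ≥0∞) (hq : q ≠ 0) (s : ℝ) (g : Euc n → ℝ)
    (hg1 : ∀ x ∈ closedBall (0:Euc n) 1, g x = 1) {j : ℤ} (hj : j ≤ 0) :
    ENNReal.ofReal ((2:ℝ)^((j:ℝ)*s)) * eLpNorm ((annulus n j).indicator g) q volume
      = tp (s + n * (1/q.toReal)) j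
        * (ENNReal.ofReal (1 - (2:ℝ)^(-(n:ℝ))) * v n) ^ (1/q.toReal) := by
  have hsub : annulus n j ⊆ closedBall (0:Euc n) 1 := by
    intro x hx
    rw [mem_closedBall, dist_zero_right]
    exact hx.2.le.trans (zpow_le_one_of_nonpos₀ one_le_two hj)
  have hind : (annulus n j).indicator g = (annulus n j).indicator (fun _ => (1:ℝ)) :=
    Set.indicator_congr fun x hx => hg1 x (hsub hx)
  rw [hind, eLpNorm_indicator_const' (measurableSet_annulus n j)
      (volume_annulus_pos n hn j).ne' hq]
  have hfact : ((2:ℝ)^j)^n - ((2:ℝ)^(j-1))^n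
      = (2:ℝ)^((j:ℝ)*(n:ℝ)) * (1 - (2:ℝ)^(-(n:ℝ))) := by
    rw [two_zpow_pow, two_zpow_pow]
    push_cast
    rw [show ((j:ℝ)-1)*(n:ℝ) = (j:ℝ)*(n:ℝ) + (-(n:ℝ)) by ring, Real.rpow_add two_pos]
    ring
  rw [volume_annulus n hn j, hfact, ENNReal.ofReal_mul (by positivity), mul_assoc,
    ENNReal.mul_rpow_of_nonneg _ _ (by positivity),
    show ENNReal.ofReal ((2:ℝ)^((j:ℝ)*(n:ℝ))) = tp (n:ℝ) j from rfl, tp_rpow]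
  simp only [enorm_one, one_mul]
  rw [show ENNReal.ofReal ((2:ℝ)^((j:ℝ)*s)) = tp s j from rfl, ← mul_assoc, tp_mul]

end HerzAux

open HerzAux Metric in
/-- `C_c^∞(ℝⁿ) ⊂ K̇^s_{q,r}(ℝⁿ)` if and only if `s/n + 1/q > 0`, or
`s/n + 1/q = 0` and `r = ∞`. -/
theorem smooth_compactly_supported_mem_herz_iff
    (n : ℕ) (hn : 1 ≤ n) (s : ℝ) (q r : ℝ≥0∞) (hq : 0 < q) (hr : 0 < r) :
    (∀ g : Euc n → ℝ, ContDiff ℝ (⊤ : ℕ∞) g → HasCompactSupport g →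
        herzNorm n s q r g < ⊤) ↔
      (0 < s / (n : ℝ) + (q⁻¹).toReal ∨
        (s / (n : ℝ) + (q⁻¹).toReal = 0 ∧ r = ⊤)) := by
  have hn0 : (0:ℝ) < n := by
    have : (1:ℝ) ≤ n := by exact_mod_cast hn
    linarith
  set κ := (q⁻¹).toReal with hκdef
  have hκq : κ = 1 / q.toReal := by rw [hκdef, ENNReal.toReal_inv, one_div]
  set t := s + n * κ with htdef
  have htt : s / (n:ℝ) + κ = t / n := by field_simp [htdef]; ring
  have hiff1 : 0 < s / (n:ℝ) + κ ↔ 0 < t := by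
    rw [htt]
    exact div_pos_iff_of_pos_right hn0
  have hiff2 : s / (n:ℝ) + κ = 0 ↔ t = 0 := by
    rw [htt, div_eq_iff hn0.ne']
    simp
  constructor
  · -- necessity, by contradiction
    intro h
    by_contra hc
    push_neg at hc
    obtain ⟨hc1, hc2⟩ := hc
    have ht0 : t ≤ 0 := not_lt.1 (mt hiff1.2 (not_lt.2 hc1))
    set φ : ContDiffBump (0 : Euc n) := ⟨1, 2, one_pos, one_lt_two⟩ with hφ
    have hg := h φ φ.contDiff φ.hasCompactSupport
    set c1 : ℝ≥0∞ := (ENNReal.ofReal (1 - (2:ℝ)^(-(n:ℝ))) * v n) ^ (1/q.toReal) with hc1def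
    have hd : 0 < 1 - (2:ℝ)^(-(n:ℝ)) := by
      have h2 : (2:ℝ)^(-(n:ℝ)) < 1 :=
        Real.rpow_lt_one_of_one_lt_of_neg one_lt_two (by linarith)
      linarith
    have hbase0 : (ENNReal.ofReal (1 - (2:ℝ)^(-(n:ℝ))) * v n) ≠ 0 :=
      mul_ne_zero (by rw [ne_eq, ENNReal.ofReal_eq_zero]; linarith) (v_pos n).ne'
    have hbaseT : (ENNReal.ofReal (1 - (2:ℝ)^(-(n:ℝ))) * v n) ≠ ⊤ :=
      ENNReal.mul_ne_top ENNReal.ofReal_ne_top (v_lt_top n).ne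
    have hc1pos : 0 < c1 := ENNReal.rpow_pos (pos_iff_ne_zero.2 hbase0) hbaseT
    have hc1T : c1 ≠ ⊤ := (ENNReal.rpow_lt_top_of_nonneg (by positivity) hbaseT).ne
    have hone : ∀ x ∈ closedBall (0:Euc n) 1, φ x = 1 := fun x hx =>
      φ.one_of_mem_closedBall hx
    have hterm : ∀ j : ℤ, j ≤ 0 →
        ENNReal.ofReal ((2:ℝ)^((j:ℝ)*s)) * eLpNorm ((annulus n j).indicator ⇑φ) q volume
          = tp t j * c1 := by
      intro j hj
      rw [term_bump n hn q hq.ne' s ⇑φ hone hj, htdef, hκq, hc1def]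
    by_cases hrtop : r = ⊤
    · have ht_neg : t < 0 := by
        rcases ht0.lt_or_eq with h' | h'
        · exact h'
        · exact absurd hrtop (hc2 (hiff2.2 h'))
      rw [herzNorm, if_pos hrtop] at hg
      refine absurd ?_ hg.ne
      rw [iSup_eq_top]
      intro b hb
      have hy1 : (1:ℝ) < 2^(-t) :=
        (Real.one_lt_rpow_iff_of_pos two_pos).2 (Or.inl ⟨one_lt_two, by linarith⟩)
      obtain ⟨k, hk⟩ := pow_unbounded_of_one_lt ((b / c1).toReal) hy1
      refine ⟨-(k:ℤ), ?_⟩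
      rw [hterm _ (by omega)]
      have htp : tp t (-(k:ℤ)) = ENNReal.ofReal (((2:ℝ)^(-t))^k) := by
        rw [tp]
        congr 1
        rw [← Real.rpow_natCast ((2:ℝ)^(-t)) k, ← Real.rpow_mul (by norm_num)]
        congr 1
        push_cast
        ring
      rw [htp]
      have hdivT : b / c1 ≠ ⊤ := (ENNReal.div_lt_top hb.ne hc1pos.ne').ne
      have hblt : b / c1 < ENNReal.ofReal (((2:ℝ)^(-t))^k) :=
        (ENNReal.lt_ofReal_iff_toReal_lt hdivT).2 hk
      exact (ENNReal.div_lt_iff (Or.inl hc1pos.ne') (Or.inl hc1T)).1 hblt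
    · have hρ : 0 < r.toReal := ENNReal.toReal_pos hr.ne' hrtop
      rw [herzNorm, if_neg hrtop] at hg
      set F : ℤ → ℝ≥0∞ := fun j => (ENNReal.ofReal ((2:ℝ)^((j:ℝ)*s)) *
        eLpNorm ((annulus n j).indicator ⇑φ) q volume) ^ r.toReal with hF
      have hne : c1 ^ r.toReal ≠ 0 := (ENNReal.rpow_pos hc1pos hc1T).ne'
      have hsum : ∑' j : ℤ, F j = ⊤ := by
        rw [eq_top_iff]
        have h1 : ∑' k : ℕ, F (-(k:ℤ)) ≤ ∑' j : ℤ, F j :=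
          ENNReal.tsum_comp_le_tsum_of_injective (fun a b hab => by omega) F
        refine le_trans ?_ h1
        have h2 : ∀ k : ℕ, c1 ^ r.toReal ≤ F (-(k:ℤ)) := by
          intro k
          rw [hF]
          apply ENNReal.rpow_le_rpow _ hρ.le
          rw [hterm (-(k:ℤ)) (by omega)]
          calc c1 = 1 * c1 := (one_mul _).symm
            _ ≤ tp t (-(k:ℤ)) * c1 :=
              mul_le_mul_left (one_le_tp ht0 (by omega)) _
        calc (⊤:ℝ≥0∞) = ∑' _ : ℕ, c1 ^ r.toReal :=
              (ENNReal.tsum_const_eq_top_of_ne_zero hne).symm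
          _ ≤ _ := ENNReal.tsum_le_tsum h2
      rw [hsum, ENNReal.top_rpow_of_pos (by positivity)] at hg
      exact absurd hg (lt_irrefl _)
  · -- sufficiency
    intro hrhs g hgsm hgsupp
    obtain ⟨M0, hM0⟩ := (hgsupp.norm).exists_bound_of_continuous hgsm.continuous.norm
    set M := max M0 0 with hM
    have hgM : ∀ x, ‖g x‖ ≤ M := fun x =>
      le_trans (by simpa using hM0 x) (le_max_left _ _)
    obtain ⟨R, hR⟩ := hgsupp.isBounded.subset_closedBall 0
    obtain ⟨k0, hk0⟩ := pow_unbounded_of_one_lt R (one_lt_two (α := ℝ))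
    set J : ℤ := k0 + 1 with hJ
    have hvanish : ∀ j : ℤ, J ≤ j → (annulus n j).indicator g = 0 := by
      intro j hj
      funext x
      by_cases hx : x ∈ annulus n j
      · simp only [Set.indicator_of_mem hx, Pi.zero_apply]
        apply image_eq_zero_of_notMem_tsupport
        intro hmem
        have h1 := hR hmem
        rw [mem_closedBall, dist_zero_right] at h1
        have h2 : (2:ℝ)^(k0:ℤ) ≤ (2:ℝ)^(j-1) :=
          zpow_le_zpow_right₀ one_le_two (by omega)
        rw [zpow_natCast] at h2
        have h3 := hx.1
        linarith
      · simp [Set.indicator_of_notMem hx]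
    set C : ℝ≥0∞ := ENNReal.ofReal M * (v n) ^ (1/q.toReal) with hC
    have hCT : C ≠ ⊤ :=
      ENNReal.mul_ne_top ENNReal.ofReal_ne_top
        (ENNReal.rpow_lt_top_of_nonneg (by positivity) (v_lt_top n).ne).ne
    have hterm : ∀ j : ℤ,
        ENNReal.ofReal ((2:ℝ)^((j:ℝ)*s)) * eLpNorm ((annulus n j).indicator g) q volume
          ≤ C * tp t j := by
      intro j
      rw [htdef, hκq, hC]
      exact term_le n hn q hq.ne' s g M (le_max_right _ _) hgM j
    by_cases hrtop : r = ⊤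
    · have ht0 : 0 ≤ t := by
        rcases hrhs with h' | ⟨h', _⟩
        · exact (hiff1.1 h').le
        · exact (hiff2.1 h').ge
      rw [herzNorm, if_pos hrtop]
      refine lt_of_le_of_lt (iSup_le fun j => ?_)
        (ENNReal.mul_lt_top hCT.lt_top (tp_ne_top t J).lt_top)
      rcases le_or_gt j J with hj | hj
      · exact (hterm j).trans (mul_le_mul_right (tp_mono t ht0 hj) _)
      · rw [hvanish j hj.le]
        simp
    · have htpos : 0 < t := by
        rcases hrhs with h' | ⟨_, h'⟩
        · exact hiff1.1 h'
        · exact absurd h' hrtop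
      have hρ : 0 < r.toReal := ENNReal.toReal_pos hr.ne' hrtop
      rw [herzNorm, if_neg hrtop]
      refine ENNReal.rpow_lt_top_of_nonneg (by positivity) ?_
      refine (tsum_geom_lt_top (mul_pos htpos hρ) J (C ^ r.toReal)
        (ENNReal.rpow_lt_top_of_nonneg hρ.le hCT).ne _ ?_).ne
      intro j
      by_cases hj : j ≤ J
      · rw [if_pos hj]
        calc (ENNReal.ofReal ((2:ℝ)^((j:ℝ)*s)) *
              eLpNorm ((annulus n j).indicator g) q volume) ^ r.toReal
            ≤ (C * tp t j) ^ r.toReal := ENNReal.rpow_le_rpow (hterm j) hρ.le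
          _ = C ^ r.toReal * tp (t * r.toReal) j := by
              rw [ENNReal.mul_rpow_of_nonneg _ _ hρ.le, tp_rpow]
      · rw [if_neg hj, hvanish j (by omega)]
        simp [ENNReal.zero_rpow_of_pos hρ]
end
end

section
/- Let n ≥ 1, s, s₁, s₂ ∈ ℝ and 0 < q, q₁, q₂, r, r₁, r₂ ≤ ∞ satisfy s = s₁ + s₂, 1/q = 1/q₁ + 1/q₂ and 1/r = 1/r₁ + 1/r₂. Then for all measurable functions f, g on ℝⁿ, ‖f·g‖_{K̇^s_{q,r}} ≤ ‖f‖_{K̇^{s₁}_{q₁,r₁}} · ‖g‖_{K̇^{s₂}_{q₂,r₂}}. -/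
open MeasureTheory Set ENNReal Filter

noncomputable section

/-- ℓᵖ-type norm of an `ℝ≥0∞`-valued sequence, matching the shape of `herzNorm`. -/
def ellNorm (p : ℝ≥0∞) (a : ℤ → ℝ≥0∞) : ℝ≥0∞ :=
  if p = ⊤ then ⨆ j : ℤ, a j else (∑' j : ℤ, a j ^ p.toReal) ^ (1 / p.toReal)

lemma ellNorm_mono (p : ℝ≥0∞) {a b : ℤ → ℝ≥0∞} (h : ∀ j, a j ≤ b j) :
    ellNorm p a ≤ ellNorm p b := by
  unfold ellNorm
  split_ifs
  · exact iSup_mono h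
  · exact ENNReal.rpow_le_rpow
      (ENNReal.tsum_le_tsum fun j => ENNReal.rpow_le_rpow (h j) ENNReal.toReal_nonneg)
      (by positivity)

lemma tsum_holder {t t₁ t₂ : ℝ} (ht : 0 < t) (ht₁ : 0 < t₁) (ht₂ : 0 < t₂)
    (h : 1 / t = 1 / t₁ + 1 / t₂) (a b : ℤ → ℝ≥0∞) :
    (∑' j : ℤ, (a j * b j) ^ t) ^ (1 / t) ≤
      (∑' j : ℤ, a j ^ t₁) ^ (1 / t₁) * (∑' j : ℤ, b j ^ t₂) ^ (1 / t₂) := by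
  have h1 : 1 / t₁ < 1 / t := by rw [h]; linarith [one_div_pos.mpr ht₂]
  have ht' : t < t₁ := (one_div_lt_one_div ht₁ ht).mp h1
  have hconj : (t₁ / t).HolderConjugate (t₂ / t) := by
    rw [Real.holderConjugate_iff]
    constructor
    · rw [lt_div_iff₀ ht]; linarith
    · rw [inv_div, inv_div]
      field_simp
      field_simp at h
      linarith
  have key := ENNReal.lintegral_mul_le_Lp_mul_Lq (Measure.count : Measure ℤ) hconj
    (f := fun j => a j ^ t) (g := fun j => b j ^ t)
    (Measurable.aemeasurable (by measurability)) (Measurable.aemeasurable (by measurability))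
  simp only [Pi.mul_apply, lintegral_count] at key
  have e1 : ∀ j, a j ^ t * b j ^ t = (a j * b j) ^ t := fun j =>
    (ENNReal.mul_rpow_of_nonneg _ _ ht.le).symm
  have e2 : ∀ j, (a j ^ t) ^ (t₁ / t) = a j ^ t₁ := fun j => by
    rw [← ENNReal.rpow_mul]; congr 1; field_simp
  have e3 : ∀ j, (b j ^ t) ^ (t₂ / t) = b j ^ t₂ := fun j => by
    rw [← ENNReal.rpow_mul]; congr 1; field_simp
  simp only [e1, e2, e3] at key
  calc (∑' j : ℤ, (a j * b j) ^ t) ^ (1 / t)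
      ≤ ((∑' j : ℤ, a j ^ t₁) ^ (1 / (t₁ / t)) * (∑' j : ℤ, b j ^ t₂) ^ (1 / (t₂ / t))) ^ (1 / t) :=
        ENNReal.rpow_le_rpow key (by positivity)
    _ = (∑' j : ℤ, a j ^ t₁) ^ (1 / t₁) * (∑' j : ℤ, b j ^ t₂) ^ (1 / t₂) := by
        rw [ENNReal.mul_rpow_of_nonneg _ _ (by positivity), ← ENNReal.rpow_mul,
          ← ENNReal.rpow_mul]
        congr 1 <;> congr 1 <;> field_simp

lemma ellNorm_mul_le (p p₁ p₂ : ℝ≥0∞) (hp₁ : 0 < p₁) (hp₂ : 0 < p₂)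
    (hpe : p⁻¹ = p₁⁻¹ + p₂⁻¹) (a b : ℤ → ℝ≥0∞) :
    ellNorm p (fun j => a j * b j) ≤ ellNorm p₁ a * ellNorm p₂ b := by
  by_cases h1 : p₁ = ⊤
  · by_cases h2 : p₂ = ⊤
    · have hp : p = ⊤ := by
        rw [← ENNReal.inv_eq_zero]
        simp [hpe, h1, h2]
      simp only [ellNorm, hp, h1, h2, if_pos rfl]
      exact iSup_le fun j => mul_le_mul' (le_iSup a j) (le_iSup b j)
    · have hp : p = p₂ := by
        rw [← inv_inj]; simp [hpe, h1]
      have hpt : p ≠ ⊤ := hp ▸ h2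
      have ht : 0 < p.toReal := ENNReal.toReal_pos (hp ▸ hp₂.ne') hpt
      simp only [ellNorm, if_neg hpt, if_pos h1, if_neg (hp ▸ h2 : p₂ ≠ ⊤), hp]
      calc (∑' j : ℤ, (a j * b j) ^ p₂.toReal) ^ (1 / p₂.toReal)
          ≤ (∑' j : ℤ, ((⨆ i : ℤ, a i) * b j) ^ p₂.toReal) ^ (1 / p₂.toReal) :=
            ENNReal.rpow_le_rpow (ENNReal.tsum_le_tsum fun j =>
              ENNReal.rpow_le_rpow (mul_le_mul' (le_iSup a j) le_rfl) ENNReal.toReal_nonneg)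
              (by positivity)
        _ = (⨆ i : ℤ, a i) * (∑' j : ℤ, b j ^ p₂.toReal) ^ (1 / p₂.toReal) := by
            simp only [ENNReal.mul_rpow_of_nonneg _ _ ENNReal.toReal_nonneg, ENNReal.tsum_mul_left]
            rw [ENNReal.mul_rpow_of_nonneg _ _ (by positivity), ← ENNReal.rpow_mul,
              mul_one_div_cancel (hp ▸ ht).ne', ENNReal.rpow_one]
  · by_cases h2 : p₂ = ⊤
    · have hp : p = p₁ := by
        rw [← inv_inj]; simp [hpe, h2]
      have hpt : p ≠ ⊤ := hp ▸ h1
      have ht : 0 < p.toReal := ENNReal.toReal_pos (hp ▸ hp₁.ne') hpt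
      simp only [ellNorm, if_neg hpt, if_pos h2, if_neg (hp ▸ h1 : p₁ ≠ ⊤), hp]
      calc (∑' j : ℤ, (a j * b j) ^ p₁.toReal) ^ (1 / p₁.toReal)
          ≤ (∑' j : ℤ, (a j * ⨆ i : ℤ, b i) ^ p₁.toReal) ^ (1 / p₁.toReal) :=
            ENNReal.rpow_le_rpow (ENNReal.tsum_le_tsum fun j =>
              ENNReal.rpow_le_rpow (mul_le_mul' le_rfl (le_iSup b j)) ENNReal.toReal_nonneg)
              (by positivity)
        _ = (∑' j : ℤ, a j ^ p₁.toReal) ^ (1 / p₁.toReal) * ⨆ i : ℤ, b i := by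
            simp only [ENNReal.mul_rpow_of_nonneg _ _ ENNReal.toReal_nonneg,
              ENNReal.tsum_mul_right]
            rw [ENNReal.mul_rpow_of_nonneg _ _ (by positivity), ← ENNReal.rpow_mul
              (⨆ i : ℤ, b i), mul_one_div_cancel (hp ▸ ht).ne', ENNReal.rpow_one]
    · -- both finite
      have hp0 : p ≠ 0 := by
        intro h0
        rw [h0, ENNReal.inv_zero] at hpe
        exact (ENNReal.add_lt_top.mpr ⟨ENNReal.inv_lt_top.mpr hp₁, ENNReal.inv_lt_top.mpr hp₂⟩).ne
          hpe.symm
      have hpt : p ≠ ⊤ := by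
        intro h0
        rw [h0, ENNReal.inv_top] at hpe
        have : p₁⁻¹ = 0 := by
          have := add_eq_zero.mp hpe.symm
          exact this.1
        exact h1 (ENNReal.inv_eq_zero.mp this)
      have ht : 0 < p.toReal := ENNReal.toReal_pos hp0 hpt
      have ht₁ : 0 < p₁.toReal := ENNReal.toReal_pos hp₁.ne' h1
      have ht₂ : 0 < p₂.toReal := ENNReal.toReal_pos hp₂.ne' h2
      have hre : 1 / p.toReal = 1 / p₁.toReal + 1 / p₂.toReal := by
        have := congrArg ENNReal.toReal hpe
        rw [ENNReal.toReal_add (by simp [hp₁.ne']) (by simp [hp₂.ne']), ENNReal.toReal_inv,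
          ENNReal.toReal_inv, ENNReal.toReal_inv] at this
        simpa [one_div] using this
      simp only [ellNorm, if_neg hpt, if_neg h1, if_neg h2]
      exact tsum_holder ht ht₁ ht₂ hre a b

lemma measurableSet_annulus (n : ℕ) (j : ℤ) : MeasurableSet (annulus n j) :=
  measurable_norm measurableSet_Ico

/-- Hölder's inequality for Herz spaces:
if `s = s₁ + s₂`, `1/q = 1/q₁ + 1/q₂` and `1/r = 1/r₁ + 1/r₂`, then
`‖f·g‖_{K̇^s_{q,r}} ≤ ‖f‖_{K̇^{s₁}_{q₁,r₁}} ‖g‖_{K̇^{s₂}_{q₂,r₂}}`. -/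
theorem herzNorm_mul_le
    (n : ℕ) (hn : 1 ≤ n) (s s₁ s₂ : ℝ) (q q₁ q₂ r r₁ r₂ : ℝ≥0∞)
    (hq : 0 < q) (hq₁ : 0 < q₁) (hq₂ : 0 < q₂)
    (hr : 0 < r) (hr₁ : 0 < r₁) (hr₂ : 0 < r₂)
    (hs : s = s₁ + s₂) (hqe : q⁻¹ = q₁⁻¹ + q₂⁻¹) (hre : r⁻¹ = r₁⁻¹ + r₂⁻¹)
    (f g : Euc n → ℝ) (hf : Measurable f) (hg : Measurable g) :
    herzNorm n s q r (fun x => f x * g x) ≤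
      herzNorm n s₁ q₁ r₁ f * herzNorm n s₂ q₂ r₂ g := by
  set A : ℤ → ℝ≥0∞ := fun j => ENNReal.ofReal ((2 : ℝ) ^ ((j : ℝ) * s₁)) *
      eLpNorm ((annulus n j).indicator f) q₁ volume with hA
  set B : ℤ → ℝ≥0∞ := fun j => ENNReal.ofReal ((2 : ℝ) ^ ((j : ℝ) * s₂)) *
      eLpNorm ((annulus n j).indicator g) q₂ volume with hB
  have hmain : herzNorm n s q r (fun x => f x * g x) ≤ ellNorm r (fun j => A j * B j) := by
    refine le_trans (le_of_eq rfl) (ellNorm_mono r fun j => ?_)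
    have hw : ENNReal.ofReal ((2 : ℝ) ^ ((j : ℝ) * s)) =
        ENNReal.ofReal ((2 : ℝ) ^ ((j : ℝ) * s₁)) * ENNReal.ofReal ((2 : ℝ) ^ ((j : ℝ) * s₂)) := by
      rw [← ENNReal.ofReal_mul (by positivity), ← Real.rpow_add two_pos]
      congr 1
      rw [hs]; ring
    have hcm : ((annulus n j).indicator fun x => f x * g x) =
        fun x => (annulus n j).indicator f x * (annulus n j).indicator g x := by
      ext x
      exact congrFun (Set.indicator_mul (annulus n j) f g) x
    have help : eLpNorm ((annulus n j).indicator fun x => f x * g x) q volume ≤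
        eLpNorm ((annulus n j).indicator f) q₁ volume *
          eLpNorm ((annulus n j).indicator g) q₂ volume := by
      rw [hcm]
      simpa only [ENNReal.coe_one, one_mul] using eLpNorm_le_eLpNorm_mul_eLpNorm_of_nnnorm (μ := volume) (hpqr := ⟨hqe.symm⟩)
        ((hf.indicator (measurableSet_annulus n j)).aestronglyMeasurable)
        ((hg.indicator (measurableSet_annulus n j)).aestronglyMeasurable)
        (· * ·) 1 (Eventually.of_forall fun x => by rw [one_mul]; exact (nnnorm_mul _ _).le)
    calc ENNReal.ofReal ((2 : ℝ) ^ ((j : ℝ) * s)) *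
          eLpNorm ((annulus n j).indicator fun x => f x * g x) q volume
        ≤ (ENNReal.ofReal ((2 : ℝ) ^ ((j : ℝ) * s₁)) * ENNReal.ofReal ((2 : ℝ) ^ ((j : ℝ) * s₂))) *
          (eLpNorm ((annulus n j).indicator f) q₁ volume *
            eLpNorm ((annulus n j).indicator g) q₂ volume) := by
          rw [← hw]; exact mul_le_mul' le_rfl help
      _ = A j * B j := by rw [hA, hB]; ring
  exact hmain.trans (ellNorm_mul_le r r₁ r₂ hr₁ hr₂ hre A B)
end
end

section
/- Let n ≥ 1, s ∈ ℝ and 0 < q, r ≤ ∞. The Gaussian x ↦ e^{−|x|²} satisfies ‖e^{−|·|²}‖_{K̇^s_{q,r}} < ∞ if and only if either s/n + 1/q > 0, or s/n + 1/q = 0 and r = ∞. -/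
open MeasureTheory Set ENNReal Filter
open scoped Pointwise

noncomputable section

private lemma two_rpow_two : (2:ℝ) ^ (2:ℝ) = 4 := by
  rw [show ((2:ℝ):ℝ) = ((2:ℕ):ℝ) by norm_num, Real.rpow_natCast]
  norm_num

private lemma four_rpow (y : ℝ) : (4:ℝ) ^ y = (2:ℝ) ^ (2 * y) := by
  rw [Real.rpow_mul (by norm_num), two_rpow_two]

private lemma two_zpow_sq (k : ℤ) : ((2:ℝ) ^ k) ^ 2 = (4:ℝ) ^ ((k:ℝ)) := by
  rw [four_rpow, ← Real.rpow_intCast 2 k, ← Real.rpow_natCast ((2:ℝ) ^ ((k:ℝ))) 2,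
    ← Real.rpow_mul (by norm_num)]
  ring_nf

private lemma exp_pow_bound (x : ℝ) (hx : 0 < x) (m : ℕ) (hm : 1 ≤ m) :
    Real.exp (-x) ≤ ((m:ℝ) / x) ^ m := by
  have hm' : (0:ℝ) < m := by exact_mod_cast hm
  have h1 : (x / m) ^ m ≤ Real.exp x := by
    have h2 : Real.exp x = Real.exp (x / m) ^ m := by
      rw [← Real.exp_nat_mul]
      congr 1
      field_simp
    rw [h2]
    exact pow_le_pow_left₀ (by positivity) (by linarith [Real.add_one_le_exp (x / m)]) m
  have h3 : ((m:ℝ) / x) ^ m = ((x / (m:ℝ)) ^ m)⁻¹ := by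
    rw [← inv_pow]
    congr 1
    field_simp
  rw [Real.exp_neg, h3]
  exact inv_anti₀ (by positivity) h1

private lemma gauss_bdd (A B : ℝ) (hA : 0 ≤ A) (hB : 0 < B) :
    ∃ C : ℝ, 0 < C ∧ ∀ j : ℤ,
      (2:ℝ) ^ ((j:ℝ) * A) * Real.exp (-(B * (4:ℝ) ^ ((j:ℝ) - 1))) ≤ C := by
  set m : ℕ := ⌈A⌉₊ + 1 with hm
  have hm1 : (1:ℕ) ≤ m := Nat.le_add_left 1 _
  have hmA : A ≤ (m:ℝ) := by
    refine le_trans (Nat.le_ceil A) ?_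
    exact_mod_cast Nat.le_succ _
  refine ⟨max 1 ((2 * (m:ℝ) / B) ^ m), lt_max_of_lt_left one_pos, fun j => ?_⟩
  have hx : (0:ℝ) < (4:ℝ) ^ ((j:ℝ) - 1) := Real.rpow_pos_of_pos (by norm_num) _
  rcases le_or_gt (j:ℝ) 0 with hj | hj
  · refine le_trans ?_ (le_max_left _ _)
    have h1 : (2:ℝ) ^ ((j:ℝ) * A) ≤ 1 :=
      Real.rpow_le_one_of_one_le_of_nonpos one_le_two
        (mul_nonpos_of_nonpos_of_nonneg hj hA)
    have h2 : Real.exp (-(B * (4:ℝ) ^ ((j:ℝ) - 1))) ≤ 1 := by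
      refine le_trans (Real.exp_le_exp.mpr ?_) (le_of_eq Real.exp_zero)
      nlinarith
    nlinarith [Real.exp_pos (-(B * (4:ℝ) ^ ((j:ℝ) - 1))),
      Real.rpow_pos_of_pos (show (0:ℝ) < 2 by norm_num) ((j:ℝ) * A)]
  · have hj' : (0:ℤ) < j := by exact_mod_cast hj
    have hj1 : (1:ℝ) ≤ (j:ℝ) := by exact_mod_cast hj'
    have h2x : (2:ℝ) ^ ((j:ℝ)) ≤ 2 * (4:ℝ) ^ ((j:ℝ) - 1) := by
      rw [four_rpow]
      have he : 2 * (2:ℝ) ^ (2 * ((j:ℝ) - 1)) = (2:ℝ) ^ (2 * (j:ℝ) - 1) := by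
        rw [show 2 * (j:ℝ) - 1 = 1 + 2 * ((j:ℝ) - 1) by ring, Real.rpow_add two_pos,
          Real.rpow_one]
      rw [he]
      exact Real.rpow_le_rpow_of_exponent_le one_le_two (by linarith)
    have hstep1 : (2:ℝ) ^ ((j:ℝ) * A) ≤ ((2:ℝ) ^ ((j:ℝ))) ^ m := by
      rw [← Real.rpow_natCast ((2:ℝ) ^ ((j:ℝ))) m, ← Real.rpow_mul (by norm_num)]
      exact Real.rpow_le_rpow_of_exponent_le one_le_two (by nlinarith)
    have hstep2 : ((2:ℝ) ^ ((j:ℝ))) ^ m ≤ (2 * (4:ℝ) ^ ((j:ℝ) - 1)) ^ m :=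
      pow_le_pow_left₀ (by positivity) h2x m
    have hstep3 : Real.exp (-(B * (4:ℝ) ^ ((j:ℝ) - 1)))
        ≤ ((m:ℝ) / (B * (4:ℝ) ^ ((j:ℝ) - 1))) ^ m :=
      exp_pow_bound _ (by positivity) m hm1
    refine le_trans ?_ (le_max_right _ _)
    calc (2:ℝ) ^ ((j:ℝ) * A) * Real.exp (-(B * (4:ℝ) ^ ((j:ℝ) - 1)))
        ≤ (2 * (4:ℝ) ^ ((j:ℝ) - 1)) ^ m * ((m:ℝ) / (B * (4:ℝ) ^ ((j:ℝ) - 1))) ^ m :=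
          mul_le_mul (hstep1.trans hstep2) hstep3 (Real.exp_pos _).le (by positivity)
      _ = (2 * (m:ℝ) / B) ^ m := by
          rw [← mul_pow]
          congr 1
          field_simp

private lemma gauss_summable (A B : ℝ) (hA : 0 < A) (hB : 0 < B) :
    Summable (fun j : ℤ => (2:ℝ) ^ ((j:ℝ) * A) * Real.exp (-(B * (4:ℝ) ^ ((j:ℝ) - 1)))) := by
  apply Summable.of_nat_of_neg
  · obtain ⟨C, hC, hCb⟩ := gauss_bdd (A + 1) B (by linarith) hB
    refine Summable.of_nonneg_of_le (fun n => by positivity) (fun n => ?_)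
      ((summable_geometric_of_lt_one (by norm_num) (by norm_num : (1:ℝ)/2 < 1)).mul_left C)
    have h1 := hCb (n : ℤ)
    have hcast : (((n:ℤ)):ℝ) = (n:ℝ) := by push_cast; rfl
    rw [hcast] at h1
    have h2 : (2:ℝ) ^ ((n:ℝ) * (A + 1)) = (2:ℝ) ^ ((n:ℝ) * A) * 2 ^ (n:ℕ) := by
      rw [show (n:ℝ) * (A + 1) = (n:ℝ) * A + n by ring, Real.rpow_add two_pos,
        Real.rpow_natCast]
    rw [h2] at h1
    have hp : (0:ℝ) < 2 ^ (n:ℕ) := by positivity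
    have h3 : (C * ((1:ℝ)/2) ^ n) = C / 2 ^ n := by
      rw [one_div, inv_pow]
      ring
    rw [h3, le_div_iff₀ hp]
    calc (2:ℝ) ^ ((n:ℝ) * A) * Real.exp (-(B * (4:ℝ) ^ ((n:ℝ) - 1))) * 2 ^ (n:ℕ)
        = (2:ℝ) ^ ((n:ℝ) * A) * 2 ^ (n:ℕ) * Real.exp (-(B * (4:ℝ) ^ ((n:ℝ) - 1))) := by ring
      _ ≤ C := h1
  · refine Summable.of_nonneg_of_le (fun n => by positivity) (fun n => ?_)
      (summable_geometric_of_lt_one (r := (2:ℝ) ^ (-A))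
        (Real.rpow_pos_of_pos two_pos _).le
        (Real.rpow_lt_one_of_one_lt_of_neg one_lt_two (neg_neg_iff_pos.mpr hA)))
    have hcast : (((-(n:ℤ)):ℤ):ℝ) = -(n:ℝ) := by push_cast; ring
    rw [hcast]
    have h1 : (2:ℝ) ^ (-(n:ℝ) * A) = ((2:ℝ) ^ (-A)) ^ n := by
      rw [← Real.rpow_natCast ((2:ℝ) ^ (-A)) n, ← Real.rpow_mul (by norm_num)]
      ring_nf
    have h2 : Real.exp (-(B * (4:ℝ) ^ (-(n:ℝ) - 1))) ≤ 1 := by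
      refine le_trans (Real.exp_le_exp.mpr ?_) (le_of_eq Real.exp_zero)
      have := Real.rpow_pos_of_pos (show (0:ℝ) < 4 by norm_num) (-(n:ℝ) - 1)
      nlinarith
    calc (2:ℝ) ^ (-(n:ℝ) * A) * Real.exp (-(B * (4:ℝ) ^ (-(n:ℝ) - 1)))
        ≤ (2:ℝ) ^ (-(n:ℝ) * A) * 1 :=
          mul_le_mul_of_nonneg_left h2 (Real.rpow_pos_of_pos two_pos _).le
      _ = ((2:ℝ) ^ (-A)) ^ n := by rw [mul_one, h1]

set_option maxHeartbeats 2000000 in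
/-- The Gaussian `x ↦ e^{-|x|²}` belongs to `K̇^s_{q,r}(ℝⁿ)` if and only if
`s/n + 1/q > 0`, or `s/n + 1/q = 0` and `r = ∞`. -/
theorem gaussian_mem_herz_iff
    (n : ℕ) (hn : 1 ≤ n) (s : ℝ) (q r : ℝ≥0∞) (hq : 0 < q) (hr : 0 < r) :
    herzNorm n s q r (fun x => Real.exp (-‖x‖ ^ 2)) < ⊤ ↔
      (0 < s / (n : ℝ) + (q⁻¹).toReal ∨
        (s / (n : ℝ) + (q⁻¹).toReal = 0 ∧ r = ⊤)) := by
  classical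
  set g : Euc n → ℝ := fun x => Real.exp (-‖x‖ ^ 2) with hg
  set t : ℝ := (q⁻¹).toReal with ht
  have htnn : 0 ≤ t := ENNReal.toReal_nonneg
  set β : ℝ := (n:ℝ) * t with hβ
  set α : ℝ := s + β with hα
  have hn' : (0:ℝ) < (n:ℝ) := by exact_mod_cast Nat.pos_of_ne_zero (by omega)
  have hqt : 1 / q.toReal = t := by
    rw [ht, ENNReal.toReal_inv, one_div]
  -- RHS equivalence
  have hdiv : s / (n:ℝ) + t = α / (n:ℝ) := by
    rw [hα, hβ]
    field_simp
  have hRHS : (0 < s / (n:ℝ) + t ∨ (s / (n:ℝ) + t = 0 ∧ r = ⊤))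
      ↔ (0 < α ∨ (α = 0 ∧ r = ⊤)) := by
    rw [hdiv]
    have h1 : 0 < α / (n:ℝ) ↔ 0 < α := by
      constructor
      · intro h
        rcases _root_.div_pos_iff.mp h with ⟨h1, _⟩ | ⟨_, h2⟩
        · exact h1
        · linarith
      · exact fun h => div_pos h hn'
    have h2 : α / (n:ℝ) = 0 ↔ α = 0 := by
      rw [_root_.div_eq_zero_iff]
      exact or_iff_left hn'.ne'
    rw [h1, h2]
  -- measurability of annuli
  have hA_meas : ∀ j : ℤ, MeasurableSet (annulus n j) := by
    intro j
    have he : annulus n j = (fun x : Euc n => ‖x‖) ⁻¹' (Set.Ico ((2:ℝ) ^ (j-1)) ((2:ℝ) ^ j)) := rfl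
    rw [he]
    exact measurable_norm measurableSet_Ico
  -- positivity of annuli volumes
  have hApos : ∀ j : ℤ, 0 < volume (annulus n j) := by
    intro j
    have hp : (0:ℝ) < (2:ℝ) ^ (j - 1) := zpow_pos two_pos _
    have h2j : (2:ℝ) ^ j = (2:ℝ) ^ (j-1) * 2 := by
      rw [← zpow_add_one₀ (two_ne_zero (α := ℝ))]
      congr 1
      ring
    have hopen : IsOpen {x : Euc n | (2:ℝ) ^ (j-1) < ‖x‖ ∧ ‖x‖ < (2:ℝ) ^ j} := by
      have he : {x : Euc n | (2:ℝ) ^ (j-1) < ‖x‖ ∧ ‖x‖ < (2:ℝ) ^ j}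
          = (fun x : Euc n => ‖x‖) ⁻¹' (Set.Ioo ((2:ℝ) ^ (j-1)) ((2:ℝ) ^ j)) := rfl
      rw [he]
      exact isOpen_Ioo.preimage continuous_norm
    have hne : Set.Nonempty {x : Euc n | (2:ℝ) ^ (j-1) < ‖x‖ ∧ ‖x‖ < (2:ℝ) ^ j} := by
      have hnorm : ‖((3/2 : ℝ) * (2:ℝ) ^ (j-1)) •
          EuclideanSpace.single (⟨0, by omega⟩ : Fin n) (1:ℝ)‖ = (3/2 : ℝ) * (2:ℝ) ^ (j-1) := by
        rw [norm_smul, EuclideanSpace.norm_single, Real.norm_eq_abs, abs_of_pos (by positivity)]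
        norm_num
      refine ⟨((3/2 : ℝ) * (2:ℝ) ^ (j-1)) • EuclideanSpace.single (⟨0, by omega⟩ : Fin n) (1:ℝ),
        ?_, ?_⟩
      · show (2:ℝ) ^ (j-1) < ‖_‖
        rw [hnorm]
        nlinarith
      · show ‖_‖ < (2:ℝ) ^ j
        rw [hnorm, h2j]
        nlinarith
    have hle := hopen.measure_pos volume hne
    exact hle.trans_le (measure_mono fun x hx => ⟨le_of_lt hx.1, hx.2⟩)
  -- base volume
  set V : ℝ≥0∞ := volume (annulus n 0) with hV
  have hVlt : V < ⊤ := by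
    refine lt_of_le_of_lt (measure_mono ?_) (measure_ball_lt_top (x := (0:Euc n)) (r := 1))
    intro x hx
    have h1 : ‖x‖ < (2:ℝ) ^ (0:ℤ) := hx.2
    rw [Metric.mem_ball, dist_zero_right]
    simpa using h1
  -- scaling of annuli
  have hsmul : ∀ j : ℤ, annulus n j = ((2:ℝ) ^ j) • annulus n 0 := by
    intro j
    have hp : (0:ℝ) < (2:ℝ) ^ j := zpow_pos two_pos j
    have hpinv : (0:ℝ) < ((2:ℝ) ^ j)⁻¹ := by positivity
    have hpi : (2:ℝ) ^ j * ((2:ℝ) ^ j)⁻¹ = 1 := mul_inv_cancel₀ hp.ne'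
    ext x
    rw [Set.mem_smul_set_iff_inv_smul_mem₀ hp.ne']
    have hnorm : ‖((2:ℝ) ^ j)⁻¹ • x‖ = ((2:ℝ) ^ j)⁻¹ * ‖x‖ := by
      rw [norm_smul, Real.norm_eq_abs, abs_of_pos hpinv]
    have e1 : (2:ℝ) ^ (j - 1) = (2:ℝ) ^ j * 2⁻¹ := by
      rw [zpow_sub_one₀ (two_ne_zero (α := ℝ))]
    have e0 : (2:ℝ) ^ ((0:ℤ) - 1) = 2⁻¹ := by norm_num
    have e00 : (2:ℝ) ^ ((0:ℤ)) = 1 := by norm_num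
    constructor
    · rintro ⟨h1, h2⟩
      rw [e1] at h1
      refine ⟨?_, ?_⟩
      · rw [e0, hnorm]
        nlinarith
      · rw [e00, hnorm]
        nlinarith
    · rintro ⟨h1, h2⟩
      rw [e0, hnorm] at h1
      rw [e00, hnorm] at h2
      refine ⟨?_, ?_⟩
      · rw [e1]
        nlinarith
      · nlinarith
  have hAvol : ∀ j : ℤ, volume (annulus n j) = ENNReal.ofReal ((2:ℝ) ^ ((j:ℝ) * (n:ℝ))) * V := by
    intro j
    rw [hsmul j, Measure.addHaar_smul, finrank_euclideanSpace_fin]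
    congr 2
    rw [abs_of_nonneg (by positivity)]
    rw [← Real.rpow_intCast 2 j, ← Real.rpow_natCast ((2:ℝ) ^ ((j:ℝ))) n,
      ← Real.rpow_mul (by norm_num)]
  -- constants
  set K : ℝ := (V ^ t).toReal with hKdef
  have hVt_ne_top : V ^ t ≠ ⊤ := (ENNReal.rpow_lt_top_of_nonneg htnn hVlt.ne).ne
  have hVt_pos : 0 < V ^ t := ENNReal.rpow_pos (hApos 0) hVlt.ne
  have hVK : V ^ t = ENNReal.ofReal K := by
    rw [hKdef, ENNReal.ofReal_toReal hVt_ne_top]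
  have hK : 0 < K := ENNReal.toReal_pos hVt_pos.ne' hVt_ne_top
  have hVt : ∀ j : ℤ, (ENNReal.ofReal ((2:ℝ) ^ ((j:ℝ) * (n:ℝ))) * V) ^ t
      = ENNReal.ofReal ((2:ℝ) ^ ((j:ℝ) * β)) * V ^ t := by
    intro j
    rw [ENNReal.mul_rpow_of_nonneg _ _ htnn,
      ENNReal.ofReal_rpow_of_pos (Real.rpow_pos_of_pos two_pos _),
      ← Real.rpow_mul (by norm_num)]
    congr 2
    rw [hβ]
    ring
  have hKfull : ∀ (j : ℤ) (c : ℝ), 0 < c →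
      eLpNorm ((annulus n j).indicator fun _ => c) q volume
        = ENNReal.ofReal (c * ((2:ℝ) ^ ((j:ℝ) * β) * K)) := by
    intro j c hc
    rw [eLpNorm_indicator_const' (hA_meas j) (hApos j).ne' hq.ne',
      Real.enorm_eq_ofReal hc.le, hAvol j, hqt, hVt j, hVK,
      ← ENNReal.ofReal_mul (le_of_lt (Real.rpow_pos_of_pos two_pos _)),
      ← ENNReal.ofReal_mul hc.le]
  -- pointwise comparisons
  have hupper : ∀ j : ℤ, eLpNorm ((annulus n j).indicator g) q volume ≤
      eLpNorm ((annulus n j).indicator fun _ => Real.exp (-(4:ℝ) ^ ((j:ℝ) - 1))) q volume := by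
    intro j
    apply eLpNorm_mono
    intro x
    rcases em (x ∈ annulus n j) with hx | hx
    · rw [Set.indicator_of_mem hx, Set.indicator_of_mem hx, hg]
      simp only [Real.norm_eq_abs, abs_of_pos (Real.exp_pos _)]
      apply Real.exp_le_exp.mpr
      have h1 : (2:ℝ) ^ (j-1) ≤ ‖x‖ := hx.1
      have h2 : ((2:ℝ) ^ (j-1)) ^ 2 ≤ ‖x‖ ^ 2 := pow_le_pow_left₀ (by positivity) h1 2
      have h3 := two_zpow_sq (j - 1)
      push_cast at h3
      linarith
    · simp [Set.indicator_of_notMem hx]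
  have hlower : ∀ j : ℤ,
      eLpNorm ((annulus n j).indicator fun _ => Real.exp (-(4:ℝ) ^ ((j:ℝ)))) q volume ≤
      eLpNorm ((annulus n j).indicator g) q volume := by
    intro j
    apply eLpNorm_mono
    intro x
    rcases em (x ∈ annulus n j) with hx | hx
    · rw [Set.indicator_of_mem hx, Set.indicator_of_mem hx, hg]
      simp only [Real.norm_eq_abs, abs_of_pos (Real.exp_pos _)]
      apply Real.exp_le_exp.mpr
      have h1 : ‖x‖ < (2:ℝ) ^ j := hx.2
      have h2 : ‖x‖ ^ 2 ≤ ((2:ℝ) ^ j) ^ 2 := pow_le_pow_left₀ (norm_nonneg x) h1.le 2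
      have h3 := two_zpow_sq j
      linarith
    · simp [Set.indicator_of_notMem hx]
  have hαeq : ∀ j : ℤ, (2:ℝ) ^ ((j:ℝ) * α) = (2:ℝ) ^ ((j:ℝ) * s) * (2:ℝ) ^ ((j:ℝ) * β) := by
    intro j
    rw [← Real.rpow_add two_pos]
    congr 1
    rw [hα]
    ring
  -- main sandwich
  have hup : ∀ j : ℤ,
      ENNReal.ofReal ((2:ℝ) ^ ((j:ℝ) * s)) * eLpNorm ((annulus n j).indicator g) q volume
        ≤ ENNReal.ofReal ((2:ℝ) ^ ((j:ℝ) * α) * Real.exp (-(4:ℝ) ^ ((j:ℝ) - 1)) * K) := by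
    intro j
    have h1 : eLpNorm ((annulus n j).indicator g) q volume
        ≤ ENNReal.ofReal (Real.exp (-(4:ℝ) ^ ((j:ℝ) - 1)) * ((2:ℝ) ^ ((j:ℝ) * β) * K)) := by
      rw [← hKfull j _ (Real.exp_pos _)]
      exact hupper j
    calc ENNReal.ofReal ((2:ℝ) ^ ((j:ℝ) * s)) * eLpNorm ((annulus n j).indicator g) q volume
        ≤ ENNReal.ofReal ((2:ℝ) ^ ((j:ℝ) * s)) *
          ENNReal.ofReal (Real.exp (-(4:ℝ) ^ ((j:ℝ) - 1)) * ((2:ℝ) ^ ((j:ℝ) * β) * K)) :=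
          mul_le_mul_right h1 _
      _ = ENNReal.ofReal ((2:ℝ) ^ ((j:ℝ) * α) * Real.exp (-(4:ℝ) ^ ((j:ℝ) - 1)) * K) := by
          rw [← ENNReal.ofReal_mul (le_of_lt (Real.rpow_pos_of_pos two_pos _))]
          congr 1
          rw [hαeq j]
          ring
  have hlo : ∀ j : ℤ,
      ENNReal.ofReal ((2:ℝ) ^ ((j:ℝ) * α) * Real.exp (-(4:ℝ) ^ ((j:ℝ))) * K)
        ≤ ENNReal.ofReal ((2:ℝ) ^ ((j:ℝ) * s)) *
            eLpNorm ((annulus n j).indicator g) q volume := by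
    intro j
    have h1 : ENNReal.ofReal (Real.exp (-(4:ℝ) ^ ((j:ℝ))) * ((2:ℝ) ^ ((j:ℝ) * β) * K))
        ≤ eLpNorm ((annulus n j).indicator g) q volume := by
      rw [← hKfull j _ (Real.exp_pos _)]
      exact hlower j
    calc ENNReal.ofReal ((2:ℝ) ^ ((j:ℝ) * α) * Real.exp (-(4:ℝ) ^ ((j:ℝ))) * K)
        = ENNReal.ofReal ((2:ℝ) ^ ((j:ℝ) * s)) *
          ENNReal.ofReal (Real.exp (-(4:ℝ) ^ ((j:ℝ))) * ((2:ℝ) ^ ((j:ℝ) * β) * K)) := by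
          rw [← ENNReal.ofReal_mul (le_of_lt (Real.rpow_pos_of_pos two_pos _))]
          congr 1
          rw [hαeq j]
          ring
      _ ≤ _ := mul_le_mul_right h1 _
  rw [hRHS]
  by_cases hrt : r = ⊤
  · simp only [herzNorm, hrt, if_pos rfl, and_true]
    constructor
    · intro hfin
      by_contra hcon
      push_neg at hcon
      obtain ⟨hc1, hc2⟩ := hcon
      have hαneg : α < 0 := lt_of_le_of_ne hc1 hc2
      have hsup : (⨆ j : ℤ, ENNReal.ofReal ((2:ℝ) ^ ((j:ℝ) * s)) *
          eLpNorm ((annulus n j).indicator g) q volume) = ⊤ := by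
        rw [iSup_eq_top]
        intro b hb
        have hρ : 1 < (2:ℝ) ^ (-α) :=
          (Real.one_lt_rpow_iff_of_pos two_pos).mpr (Or.inl ⟨one_lt_two, by linarith⟩)
        obtain ⟨N, hN⟩ :=
          ((tendsto_pow_atTop_atTop_of_one_lt hρ).eventually_ge_atTop
            ((b.toReal + 1) / (Real.exp (-1) * K))).exists
        refine ⟨-(N:ℤ), lt_of_lt_of_le ?_ (hlo (-(N:ℤ)))⟩
        rw [ENNReal.lt_ofReal_iff_toReal_lt (ne_of_lt hb)]
        have hc : (((-(N:ℤ)):ℤ):ℝ) = -(N:ℝ) := by push_cast; ring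
        rw [hc]
        have h1 : (2:ℝ) ^ (-(N:ℝ) * α) = ((2:ℝ) ^ (-α)) ^ N := by
          rw [← Real.rpow_natCast ((2:ℝ) ^ (-α)) N, ← Real.rpow_mul (by norm_num)]
          ring_nf
        have h2 : Real.exp (-1) ≤ Real.exp (-(4:ℝ) ^ (-(N:ℝ))) := by
          apply Real.exp_le_exp.mpr
          have h4 : (4:ℝ) ^ (-(N:ℝ)) ≤ 1 :=
            Real.rpow_le_one_of_one_le_of_nonpos (by norm_num)
              (neg_nonpos.mpr (Nat.cast_nonneg N))
          linarith
        have hN' : b.toReal + 1 ≤ ((2:ℝ) ^ (-α)) ^ N * (Real.exp (-1) * K) :=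
          (div_le_iff₀ (by positivity)).mp hN
        have hmono : ((2:ℝ) ^ (-α)) ^ N * (Real.exp (-1) * K)
            ≤ ((2:ℝ) ^ (-α)) ^ N * (Real.exp (-(4:ℝ) ^ (-(N:ℝ))) * K) := by
          apply mul_le_mul_of_nonneg_left _ (by positivity)
          exact mul_le_mul_of_nonneg_right h2 hK.le
        calc b.toReal < b.toReal + 1 := lt_add_one _
          _ ≤ ((2:ℝ) ^ (-α)) ^ N * (Real.exp (-(4:ℝ) ^ (-(N:ℝ))) * K) := hN'.trans hmono
          _ = (2:ℝ) ^ (-(N:ℝ) * α) * Real.exp (-(4:ℝ) ^ (-(N:ℝ))) * K := by rw [h1]; ring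
      exact hfin.ne hsup
    · intro hcase
      have h0le : 0 ≤ α := by
        rcases hcase with h | h
        · exact h.le
        · exact le_of_eq h.symm
      obtain ⟨C, hC, hCb⟩ := gauss_bdd α 1 h0le one_pos
      simp only [one_mul] at hCb
      refine lt_of_le_of_lt (iSup_le fun j => le_trans (hup j)
        (ENNReal.ofReal_le_ofReal ?_)) (show ENNReal.ofReal (C * K) < ⊤ from ENNReal.ofReal_lt_top)
      exact mul_le_mul_of_nonneg_right (hCb j) hK.le
  · simp only [herzNorm, if_neg hrt]
    have hrr : 0 < r.toReal := ENNReal.toReal_pos hr.ne' hrt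
    have hRHS2 : (0 < α ∨ (α = 0 ∧ r = ⊤)) ↔ 0 < α := by
      constructor
      · rintro (h | ⟨_, h⟩)
        · exact h
        · exact absurd h hrt
      · exact Or.inl
    rw [hRHS2]
    constructor
    · intro hfin
      by_contra hc
      have hαle : α ≤ 0 := not_lt.mp hc
      have hε : ((ENNReal.ofReal (Real.exp (-1) * K)) ^ r.toReal) ≠ 0 :=
        (ENNReal.rpow_pos (ENNReal.ofReal_pos.mpr (by positivity))
          ENNReal.ofReal_ne_top).ne'
      have hinj : Function.Injective (fun m : ℕ => -(m:ℤ)) := by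
        intro a b hab
        simpa using hab
      have hS : (∑' j : ℤ, (ENNReal.ofReal ((2:ℝ) ^ ((j:ℝ) * s)) *
          eLpNorm ((annulus n j).indicator g) q volume) ^ r.toReal) = ⊤ := by
        rw [← top_le_iff]
        have h1 : ∀ m : ℕ, (ENNReal.ofReal (Real.exp (-1) * K)) ^ r.toReal ≤
            (ENNReal.ofReal ((2:ℝ) ^ ((((-(m:ℤ)):ℤ):ℝ) * s)) *
              eLpNorm ((annulus n (-(m:ℤ))).indicator g) q volume) ^ r.toReal := by
          intro m
          apply ENNReal.rpow_le_rpow _ hrr.le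
          refine le_trans (ENNReal.ofReal_le_ofReal ?_) (hlo (-(m:ℤ)))
          have hc1 : (((-(m:ℤ)):ℤ):ℝ) = -(m:ℝ) := by push_cast; ring
          rw [hc1]
          have e1 : (1:ℝ) ≤ (2:ℝ) ^ (-(m:ℝ) * α) := by
            have := Real.rpow_le_rpow_of_exponent_le one_le_two
              (show (0:ℝ) ≤ -(m:ℝ) * α by nlinarith [Nat.cast_nonneg (α := ℝ) m])
            rwa [Real.rpow_zero] at this
          have e2 : Real.exp (-1) ≤ Real.exp (-(4:ℝ) ^ (-(m:ℝ))) := by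
            apply Real.exp_le_exp.mpr
            have h4 : (4:ℝ) ^ (-(m:ℝ)) ≤ 1 :=
              Real.rpow_le_one_of_one_le_of_nonpos (by norm_num)
                (neg_nonpos.mpr (Nat.cast_nonneg m))
            linarith
          nlinarith [mul_le_mul_of_nonneg_right
            (mul_le_mul e1 e2 (Real.exp_pos (-1:ℝ)).le (by positivity)) hK.le]
        calc (⊤:ℝ≥0∞) = ∑' _ : ℕ, (ENNReal.ofReal (Real.exp (-1) * K)) ^ r.toReal :=
              (ENNReal.tsum_const_eq_top_of_ne_zero hε).symm
          _ ≤ ∑' m : ℕ, (ENNReal.ofReal ((2:ℝ) ^ ((((-(m:ℤ)):ℤ):ℝ) * s)) *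
              eLpNorm ((annulus n (-(m:ℤ))).indicator g) q volume) ^ r.toReal :=
              ENNReal.tsum_le_tsum h1
          _ ≤ _ := ENNReal.tsum_comp_le_tsum_of_injective hinj _
      rw [hS, ENNReal.top_rpow_of_pos (by positivity)] at hfin
      exact (lt_irrefl _ hfin)
    · intro hα0
      apply ENNReal.rpow_lt_top_of_nonneg (by positivity)
      have hsum : Summable (fun j : ℤ => K ^ r.toReal *
          ((2:ℝ) ^ ((j:ℝ) * (α * r.toReal)) *
            Real.exp (-(r.toReal * (4:ℝ) ^ ((j:ℝ) - 1))))) :=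
        (gauss_summable (α * r.toReal) r.toReal (mul_pos hα0 hrr) hrr).mul_left _
      have hUpow : ∀ j : ℤ, ((2:ℝ) ^ ((j:ℝ) * α) * Real.exp (-(4:ℝ) ^ ((j:ℝ) - 1)) * K)
          ^ r.toReal = K ^ r.toReal * ((2:ℝ) ^ ((j:ℝ) * (α * r.toReal)) *
            Real.exp (-(r.toReal * (4:ℝ) ^ ((j:ℝ) - 1)))) := by
        intro j
        rw [Real.mul_rpow (by positivity) hK.le,
          Real.mul_rpow (by positivity) (Real.exp_pos _).le,
          ← Real.rpow_mul (by norm_num), ← Real.exp_mul]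
        ring_nf
      have hle : ∀ j : ℤ, (ENNReal.ofReal ((2:ℝ) ^ ((j:ℝ) * s)) *
          eLpNorm ((annulus n j).indicator g) q volume) ^ r.toReal
          ≤ ENNReal.ofReal (K ^ r.toReal * ((2:ℝ) ^ ((j:ℝ) * (α * r.toReal)) *
            Real.exp (-(r.toReal * (4:ℝ) ^ ((j:ℝ) - 1))))) := by
        intro j
        calc (ENNReal.ofReal ((2:ℝ) ^ ((j:ℝ) * s)) *
            eLpNorm ((annulus n j).indicator g) q volume) ^ r.toReal
            ≤ (ENNReal.ofReal ((2:ℝ) ^ ((j:ℝ) * α) * Real.exp (-(4:ℝ) ^ ((j:ℝ) - 1)) * K))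
              ^ r.toReal := ENNReal.rpow_le_rpow (hup j) hrr.le
          _ = ENNReal.ofReal (K ^ r.toReal * ((2:ℝ) ^ ((j:ℝ) * (α * r.toReal)) *
              Real.exp (-(r.toReal * (4:ℝ) ^ ((j:ℝ) - 1))))) := by
              rw [ENNReal.ofReal_rpow_of_nonneg (by positivity) hrr.le, hUpow j]
      refine ne_of_lt (lt_of_le_of_lt (ENNReal.tsum_le_tsum hle) ?_)
      calc ∑' j : ℤ, ENNReal.ofReal (K ^ r.toReal * ((2:ℝ) ^ ((j:ℝ) * (α * r.toReal)) *
            Real.exp (-(r.toReal * (4:ℝ) ^ ((j:ℝ) - 1)))))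
            = ENNReal.ofReal (∑' j : ℤ, K ^ r.toReal * ((2:ℝ) ^ ((j:ℝ) * (α * r.toReal)) *
              Real.exp (-(r.toReal * (4:ℝ) ^ ((j:ℝ) - 1))))) :=
              (ENNReal.ofReal_tsum_of_nonneg (fun j => by positivity) hsum).symm
          _ < ⊤ := ENNReal.ofReal_lt_top
end
end

section
/- Let n ≥ 1, s ∈ ℝ and 0 < r ≤ ∞. For every g ∈ C_c^∞(ℝⁿ), ‖χ_{A_1} − g‖_{K̇^s_{∞,r}} ≥ min(1, 2^s)/2, where χ_{A_1} is the indicator function of the annulus A_1 = {x ∈ ℝⁿ : 1 ≤ |x| < 2}. In particular, C_c^∞(ℝⁿ) is not dense in K̇^s_{∞,r}(ℝⁿ). -/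
open MeasureTheory Set ENNReal NNReal Filter

noncomputable section

lemma mem_annulus_one {n : ℕ} {x : Euc n} : x ∈ annulus n 1 ↔ 1 ≤ ‖x‖ ∧ ‖x‖ < 2 := by
  simp [annulus]

lemma mem_annulus_zero {n : ℕ} {x : Euc n} : x ∈ annulus n 0 ↔ (1:ℝ)/2 ≤ ‖x‖ ∧ ‖x‖ < 1 := by
  norm_num [annulus]

-- a positive-measure set where |f| > p forces the L^∞ norm to be ≥ p
lemma le_eLpNormTop {n : ℕ} (f : Euc n → ℝ) {S : Set (Euc n)} (hS : volume S ≠ 0)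
    {p : ℝ≥0} (h : ∀ x ∈ S, (p : ℝ) < |f x|) : (p : ℝ≥0∞) ≤ eLpNorm f ⊤ volume := by
  rw [eLpNorm_exponent_top, eLpNormEssSup]
  have hae := _root_.ae_le_essSup (μ := (volume : Measure (Euc n))) (f := fun x => (‖f x‖₊ : ℝ≥0∞))
  by_contra hcon
  push_neg at hcon
  have hsub : S ⊆ {x | ¬ ((‖f x‖₊ : ℝ≥0∞) ≤ essSup (fun x => (‖f x‖₊ : ℝ≥0∞)) volume)} := by
    intro x hx hle
    have h1 : (p : ℝ≥0∞) < (‖f x‖₊ : ℝ≥0∞) := by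
      rw [ENNReal.coe_lt_coe, ← NNReal.coe_lt_coe, coe_nnnorm, Real.norm_eq_abs]
      exact h x hx
    exact absurd (h1.trans_le hle) (not_lt.2 hcon.le)
  exact hS (measure_mono_null hsub hae)

-- one term bounds the Herz norm
lemma term_le_herzNorm {n : ℕ} {s : ℝ} {r : ℝ≥0∞} (hr : 0 < r) (f : Euc n → ℝ) (j : ℤ) :
    ENNReal.ofReal ((2 : ℝ) ^ ((j : ℝ) * s)) * eLpNorm ((annulus n j).indicator f) ⊤ volume
      ≤ herzNorm n s ⊤ r f := by
  unfold herzNorm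
  split_ifs with h
  · exact le_iSup (fun k : ℤ => ENNReal.ofReal ((2 : ℝ) ^ ((k : ℝ) * s)) *
      eLpNorm ((annulus n k).indicator f) ⊤ volume) j
  · have hρ : 0 < r.toReal := ENNReal.toReal_pos hr.ne' h
    set a := ENNReal.ofReal ((2 : ℝ) ^ ((j : ℝ) * s)) *
      eLpNorm ((annulus n j).indicator f) ⊤ volume
    calc a = (a ^ r.toReal) ^ (1 / r.toReal) := by
            rw [← ENNReal.rpow_mul, mul_one_div_cancel hρ.ne', ENNReal.rpow_one]
      _ ≤ _ := ENNReal.rpow_le_rpow (ENNReal.le_tsum j) (by positivity)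

lemma not_mem_annulus_one_of_mem {n : ℕ} {j : ℤ} (hj : j ≠ 1) {x : Euc n}
    (hx : x ∈ annulus n j) : x ∉ annulus n 1 := by
  intro hx1
  rw [mem_annulus_one] at hx1
  obtain ⟨h1, h2⟩ := hx
  rcases lt_or_gt_of_ne hj with hlt | hgt
  · have h3 : (2:ℝ)^j ≤ 2^(0:ℤ) := zpow_le_zpow_right₀ one_le_two (by omega)
    rw [zpow_zero] at h3
    linarith [hx1.1]
  · have h3 : (2:ℝ)^(1:ℤ) ≤ 2^(j-1) := zpow_le_zpow_right₀ one_le_two (by omega)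
    norm_num at h3
    linarith [hx1.2]

lemma key_bound {n : ℕ} (hn : 1 ≤ n) (s : ℝ) {r : ℝ≥0∞} (hr : 0 < r)
    (g : Euc n → ℝ) (hg : Continuous g) :
    ENNReal.ofReal (min 1 ((2 : ℝ) ^ s) / 2) ≤
      herzNorm n s ⊤ r (fun x => (annulus n 1).indicator (fun _ => (1 : ℝ)) x - g x) := by
  set h : Euc n → ℝ := fun x => (annulus n 1).indicator (fun _ => (1:ℝ)) x - g x with hh
  set x₀ : Euc n := EuclideanSpace.single (⟨0, hn⟩ : Fin n) (1:ℝ) with hx₀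
  have hx₀n : ‖x₀‖ = 1 := by rw [hx₀, EuclideanSpace.norm_single]; norm_num
  rcases le_total (g x₀) (1/2) with hc | hc
  · -- use j = 1
    have e1 : ENNReal.ofReal (1/2) ≤ eLpNorm ((annulus n 1).indicator h) ⊤ volume := by
      apply ENNReal.le_of_forall_nnreal_lt
      intro p hp
      have hp' : (p:ℝ) < 1/2 := by
        rw [← ENNReal.ofReal_coe_nnreal] at hp
        exact (ENNReal.ofReal_lt_ofReal_iff (by norm_num)).1 hp
      set U := {x : Euc n | (p:ℝ) < |1 - g x|} with hU
      have hUo : IsOpen U := isOpen_lt continuous_const (continuous_const.sub hg).abs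
      have hx₀U : x₀ ∈ U := by
        simp only [hU, mem_setOf_eq]
        rw [abs_of_nonneg (by linarith)]; linarith
      obtain ⟨δ, hδ, hball⟩ := Metric.isOpen_iff.1 hUo x₀ hx₀U
      have hmin : 0 < min δ 1 := lt_min hδ one_pos
      set t : ℝ := 1 + min δ 1 / 4 with ht
      set V := U ∩ ({x : Euc n | 1 < ‖x‖} ∩ {x : Euc n | ‖x‖ < 2}) with hV
      have hVo : IsOpen V := hUo.inter ((isOpen_lt continuous_const continuous_norm).inter
        (isOpen_lt continuous_norm continuous_const))
      have hyU : t • x₀ ∈ U := by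
        apply hball
        rw [Metric.mem_ball, dist_eq_norm]
        have h2 : t • x₀ - x₀ = (t - 1) • x₀ := by
          have h3 := sub_smul t 1 x₀
          rw [one_smul] at h3
          exact h3.symm
        rw [h2, norm_smul, hx₀n, mul_one, Real.norm_eq_abs, ht]
        rw [abs_of_nonneg (by linarith)]
        have := min_le_left δ 1
        linarith
      have hyn : ‖t • x₀‖ = t := by
        rw [norm_smul, hx₀n, mul_one, Real.norm_eq_abs, abs_of_nonneg (by simp only [ht]; linarith)]
      have hVne : V.Nonempty := by
        refine ⟨t • x₀, hyU, ?_, ?_⟩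
        · rw [mem_setOf_eq, hyn]; simp only [ht]; linarith
        · rw [mem_setOf_eq, hyn]; have := min_le_right δ 1; simp only [ht]; linarith
      have hvol : volume V ≠ 0 := (hVo.measure_pos volume hVne).ne'
      apply le_eLpNormTop _ hvol
      intro x hx
      have hxA : x ∈ annulus n 1 := mem_annulus_one.2 ⟨le_of_lt hx.2.1, hx.2.2⟩
      rw [Set.indicator_of_mem hxA, hh]
      simp only
      rw [Set.indicator_of_mem hxA]
      exact hx.1
    calc ENNReal.ofReal (min 1 ((2 : ℝ) ^ s) / 2)
        ≤ ENNReal.ofReal ((2:ℝ) ^ (((1:ℤ):ℝ) * s)) * ENNReal.ofReal (1/2) := by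
          rw [← ENNReal.ofReal_mul (by positivity)]
          apply ENNReal.ofReal_le_ofReal
          push_cast
          rw [one_mul]
          have := min_le_right 1 ((2:ℝ)^s)
          linarith
      _ ≤ ENNReal.ofReal ((2:ℝ) ^ (((1:ℤ):ℝ) * s)) *
            eLpNorm ((annulus n 1).indicator h) ⊤ volume := mul_le_mul_right e1 _
      _ ≤ _ := term_le_herzNorm hr h 1
  · -- use j = 0
    have e0 : ENNReal.ofReal (1/2) ≤ eLpNorm ((annulus n 0).indicator h) ⊤ volume := by
      apply ENNReal.le_of_forall_nnreal_lt
      intro p hp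
      have hp' : (p:ℝ) < 1/2 := by
        rw [← ENNReal.ofReal_coe_nnreal] at hp
        exact (ENNReal.ofReal_lt_ofReal_iff (by norm_num)).1 hp
      set U := {x : Euc n | (p:ℝ) < |g x|} with hU
      have hUo : IsOpen U := isOpen_lt continuous_const hg.abs
      have hx₀U : x₀ ∈ U := by
        simp only [hU, mem_setOf_eq]
        rw [abs_of_nonneg (by linarith)]; linarith
      obtain ⟨δ, hδ, hball⟩ := Metric.isOpen_iff.1 hUo x₀ hx₀U
      have hmin : 0 < min δ 1 := lt_min hδ one_pos
      have hmin1 : min δ 1 ≤ 1 := min_le_right δ 1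
      set t : ℝ := 1 - min δ 1 / 4 with ht
      set V := U ∩ ({x : Euc n | (1:ℝ)/2 < ‖x‖} ∩ {x : Euc n | ‖x‖ < 1}) with hV
      have hVo : IsOpen V := hUo.inter ((isOpen_lt continuous_const continuous_norm).inter
        (isOpen_lt continuous_norm continuous_const))
      have hyU : t • x₀ ∈ U := by
        apply hball
        rw [Metric.mem_ball, dist_eq_norm]
        have h2 : t • x₀ - x₀ = (t - 1) • x₀ := by
          have h3 := sub_smul t 1 x₀
          rw [one_smul] at h3
          exact h3.symm
        rw [h2, norm_smul, hx₀n, mul_one, Real.norm_eq_abs, ht]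
        rw [abs_of_nonpos (by linarith)]
        have := min_le_left δ 1
        linarith
      have hyn : ‖t • x₀‖ = t := by
        rw [norm_smul, hx₀n, mul_one, Real.norm_eq_abs, abs_of_nonneg (by simp only [ht]; linarith)]
      have hVne : V.Nonempty := by
        refine ⟨t • x₀, hyU, ?_, ?_⟩
        · rw [mem_setOf_eq, hyn]; simp only [ht]; linarith
        · rw [mem_setOf_eq, hyn]; simp only [ht]; linarith
      have hvol : volume V ≠ 0 := (hVo.measure_pos volume hVne).ne'
      apply le_eLpNormTop _ hvol
      intro x hx
      have hxA : x ∈ annulus n 0 := mem_annulus_zero.2 ⟨le_of_lt hx.2.1, hx.2.2⟩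
      have hxA1 : x ∉ annulus n 1 := not_mem_annulus_one_of_mem (by norm_num) hxA
      rw [Set.indicator_of_mem hxA, hh]
      simp only
      rw [Set.indicator_of_notMem hxA1, zero_sub, abs_neg]
      exact hx.1
    calc ENNReal.ofReal (min 1 ((2 : ℝ) ^ s) / 2)
        ≤ ENNReal.ofReal ((2:ℝ) ^ (((0:ℤ):ℝ) * s)) * ENNReal.ofReal (1/2) := by
          rw [← ENNReal.ofReal_mul (by positivity)]
          apply ENNReal.ofReal_le_ofReal
          push_cast
          rw [zero_mul, Real.rpow_zero, one_mul]
          have := min_le_left 1 ((2:ℝ)^s)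
          linarith
      _ ≤ ENNReal.ofReal ((2:ℝ) ^ (((0:ℤ):ℝ) * s)) *
            eLpNorm ((annulus n 0).indicator h) ⊤ volume := mul_le_mul_right e0 _
      _ ≤ _ := term_le_herzNorm hr h 0

lemma chi_herz_fin {n : ℕ} (s : ℝ) {r : ℝ≥0∞} (hr : 0 < r) :
    herzNorm n s ⊤ r ((annulus n 1).indicator (fun _ => (1:ℝ))) < ⊤ := by
  set f : Euc n → ℝ := (annulus n 1).indicator (fun _ => (1:ℝ)) with hf
  have hzero : ∀ j : ℤ, j ≠ 1 → (annulus n j).indicator f = 0 := by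
    intro j hj
    funext x
    by_cases hx : x ∈ annulus n j
    · rw [Set.indicator_of_mem hx, hf,
        Set.indicator_of_notMem (not_mem_annulus_one_of_mem hj hx)]
      rfl
    · rw [Set.indicator_of_notMem hx]; rfl
  have hle : ∀ j : ℤ, eLpNorm ((annulus n j).indicator f) ⊤ volume ≤ 1 := by
    intro j
    rw [eLpNorm_exponent_top]
    have : (1 : ℝ≥0∞) = ENNReal.ofReal 1 := by norm_num
    rw [this]
    apply eLpNormEssSup_le_of_ae_bound (C := 1)
    filter_upwards with x
    rw [hf, Real.norm_eq_abs]
    by_cases hxj : x ∈ annulus n j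
    · rw [Set.indicator_of_mem hxj]
      by_cases hx : x ∈ annulus n 1
      · rw [Set.indicator_of_mem hx]; norm_num
      · rw [Set.indicator_of_notMem hx]; norm_num
    · rw [Set.indicator_of_notMem hxj]; norm_num
  have hbound : ∀ j : ℤ, ENNReal.ofReal ((2 : ℝ) ^ ((j : ℝ) * s)) *
      eLpNorm ((annulus n j).indicator f) ⊤ volume ≤ ENNReal.ofReal ((2:ℝ) ^ (((1:ℤ):ℝ) * s)) := by
    intro j
    by_cases hj : j = 1
    · subst hj
      calc _ ≤ ENNReal.ofReal ((2 : ℝ) ^ (((1:ℤ) : ℝ) * s)) * 1 := mul_le_mul_right (hle 1) _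
        _ = _ := mul_one _
    · rw [hzero j hj, eLpNorm_zero, mul_zero]
      exact zero_le
  unfold herzNorm
  split_ifs with h
  · exact lt_of_le_of_lt (iSup_le hbound) ENNReal.ofReal_lt_top
  · have hρ : 0 < r.toReal := ENNReal.toReal_pos hr.ne' h
    have htsum : (∑' j : ℤ, (ENNReal.ofReal ((2 : ℝ) ^ ((j : ℝ) * s)) *
        eLpNorm ((annulus n j).indicator f) ⊤ volume) ^ r.toReal)
        = (ENNReal.ofReal ((2 : ℝ) ^ (((1:ℤ) : ℝ) * s)) *
        eLpNorm ((annulus n 1).indicator f) ⊤ volume) ^ r.toReal := by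
      apply tsum_eq_single
      intro j hj
      rw [hzero j hj, eLpNorm_zero, mul_zero, ENNReal.zero_rpow_of_pos hρ]
    rw [htsum]
    apply ENNReal.rpow_lt_top_of_nonneg (by positivity)
    apply ENNReal.rpow_ne_top_of_nonneg hρ.le
    exact (lt_of_le_of_lt (hbound 1) ENNReal.ofReal_lt_top).ne

/-- For every `g ∈ C_c^∞(ℝⁿ)`, `‖χ_{A₁} - g‖_{K̇^s_{∞,r}} ≥ min(1, 2^s)/2`;
in particular, `C_c^∞(ℝⁿ)` is not dense in `K̇^s_{∞,r}(ℝⁿ)`. -/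
theorem herz_qinfty_not_dense
    (n : ℕ) (hn : 1 ≤ n) (s : ℝ) (r : ℝ≥0∞) (hr : 0 < r) :
    (∀ g : Euc n → ℝ, ContDiff ℝ (⊤ : ℕ∞) g → HasCompactSupport g →
      ENNReal.ofReal (min 1 ((2 : ℝ) ^ s) / 2) ≤
        herzNorm n s ⊤ r (fun x => (annulus n 1).indicator (fun _ => (1 : ℝ)) x - g x)) ∧
    ¬ (∀ f : Euc n → ℝ, Measurable f → herzNorm n s ⊤ r f < ⊤ →
        ∀ ε : ℝ, 0 < ε → ∃ g : Euc n → ℝ, ContDiff ℝ (⊤ : ℕ∞) g ∧ HasCompactSupport g ∧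
          herzNorm n s ⊤ r (fun x => f x - g x) < ENNReal.ofReal ε) := by
  constructor
  · intro g hg _
    exact key_bound hn s hr g hg.continuous
  · intro H
    set f : Euc n → ℝ := (annulus n 1).indicator (fun _ => (1:ℝ)) with hf
    have hAmeas : MeasurableSet (annulus n 1) := by
      have : annulus n 1 = (fun x : Euc n => ‖x‖) ⁻¹' (Set.Ico ((2:ℝ)^((1:ℤ)-1)) ((2:ℝ)^(1:ℤ))) := rfl
      rw [this]
      exact continuous_norm.measurable measurableSet_Ico
    have hmeas : Measurable f := measurable_const.indicator hAmeas
    have hε : 0 < min 1 ((2:ℝ)^s) / 2 :=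
      div_pos (lt_min one_pos (Real.rpow_pos_of_pos two_pos s)) two_pos
    obtain ⟨g, hg1, _, hg3⟩ := H f hmeas (chi_herz_fin s hr) _ hε
    exact absurd hg3 (not_lt.2 (key_bound hn s hr g hg1.continuous))
end
end
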